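/- The quaternions with the slice topology, (ℍ, τ_s), form a path-connected topological space. -/

import Mathlib

open scoped Quaternion

/-- The slice `ℂ_I = ℝ + ℝI` inside the quaternions. -/
def qslice (I : ℍ[ℝ]) : Set ℍ[ℝ] := {q | ∃ x y : ℝ, q = (x : ℍ[ℝ]) + y • I}

/-- The slice topology on `ℍ`. -/
noncomputable def sliceTopology : TopologicalSpace ℍ[ℝ] :=
  ⨆ I ∈ {I : ℍ[ℝ] | I ^ 2 = -1},
    TopologicalSpace.coinduced (Subtype.val : qslice I → ℍ[ℝ]) inferInstance

lemma exists_slice (q : ℍ[ℝ]) : ∃ I : ℍ[ℝ], I ^ 2 = -1 ∧ q ∈ qslice I := by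
  by_cases h : q.imI = 0 ∧ q.imJ = 0 ∧ q.imK = 0
  · refine ⟨(id ⟨0, 1, 0, 0⟩ : ℍ[ℝ]), ?_, q.re, 0, ?_⟩
    · ext <;> simp [pow_two] <;> simp [id]
    · obtain ⟨h1, h2, h3⟩ := h
      ext <;> simp [h1, h2, h3]
  · set s : ℝ := q.imI ^ 2 + q.imJ ^ 2 + q.imK ^ 2 with hs
    have hspos : 0 < s := by
      rcases not_and_or.mp h with h1 | h23
      · positivity
      rcases not_and_or.mp h23 with h2 | h3 <;> positivity
    set n : ℝ := Real.sqrt s with hn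
    have hnpos : 0 < n := Real.sqrt_pos.mpr hspos
    have hn2 : n ^ 2 = s := Real.sq_sqrt hspos.le
    refine ⟨(id ⟨0, q.imI / n, q.imJ / n, q.imK / n⟩ : ℍ[ℝ]), ?_, q.re, n, ?_⟩
    · ext <;> simp [pow_two] <;> simp only [id] <;> field_simp <;> nlinarith [hn2]
    · ext <;> simp <;> simp [id] <;> field_simp

lemma joined_zero (q : ℍ[ℝ]) : @Joined ℍ[ℝ] sliceTopology 0 q := by
  obtain ⟨I, hI, hq⟩ := exists_slice q
  have hval : @Continuous (qslice I) ℍ[ℝ] _ sliceTopology Subtype.val := by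
    rw [@continuous_iff_coinduced_le]
    rw [sliceTopology]
    exact le_iSup₂ (f := fun (J : ℍ[ℝ]) (_ : J ∈ {J : ℍ[ℝ] | J ^ 2 = -1}) =>
      TopologicalSpace.coinduced (Subtype.val : qslice J → ℍ[ℝ]) inferInstance) I hI
  have hmem : ∀ t : ℝ, t • q ∈ qslice I := by
    obtain ⟨x, y, rfl⟩ := hq
    intro t
    exact ⟨t * x, t * y, by push_cast; rw [smul_add, mul_smul]; norm_cast⟩
  have hf : Continuous (fun t : ℝ => (⟨t • q, hmem t⟩ : qslice I)) :=
    Continuous.subtype_mk (continuous_id.smul continuous_const) _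
  have hcomp : @Continuous ℝ ℍ[ℝ] _ sliceTopology (fun t : ℝ => t • q) :=
    @Continuous.comp ℝ (qslice I) ℍ[ℝ] _ _ sliceTopology _ _ hval hf
  refine Nonempty.intro (@Path.mk ℍ[ℝ] sliceTopology 0 q
    (@ContinuousMap.mk _ _ _ sliceTopology (fun t => (t : ℝ) • q) ?_) ?_ ?_)
  · exact @Continuous.comp unitInterval ℝ ℍ[ℝ] _ _ sliceTopology _ _ hcomp
      continuous_subtype_val
  · simp
  · simp

/-- `(ℍ, τ_s)` is a path-connected topological space. -/
theorem sliceTopology_pathConnected :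
    @PathConnectedSpace ℍ[ℝ] sliceTopology := by
  refine @PathConnectedSpace.mk ℍ[ℝ] sliceTopology ⟨0⟩ ?_
  exact fun x y => @Joined.trans ℍ[ℝ] sliceTopology x 0 y
    (@Joined.symm ℍ[ℝ] sliceTopology 0 x (joined_zero x)) (joined_zero y)
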